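/- Let B* ⊂ ℤ^n be a free commutative monoid with basis {b_1,…,b_k} (i.e., every element of B* has a unique representation as a nonnegative integer combination of the b_i). Then b_1,…,b_k are linearly independent over ℝ; in particular k ≤ n. -/
import Mathlib

open scoped ENNReal

open Matrix in
private lemma aux_det_ne_zero {n k : ℕ} (A : Matrix (Fin k) (Fin n) ℚ)
    (hA : LinearIndependent ℚ (fun i => A i)) : (A * Aᵀ).det ≠ 0 := by
  intro hdet
  obtain ⟨v, hv0, hv⟩ := (Matrix.exists_mulVec_eq_zero_iff).2 hdet
  set x : Fin n → ℚ := Aᵀ *ᵥ v with hx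
  have hxx : x ⬝ᵥ x = 0 := by
    calc x ⬝ᵥ x = (v ᵥ* A) ⬝ᵥ x := by rw [hx, Matrix.mulVec_transpose]
    _ = v ⬝ᵥ (A *ᵥ x) := (Matrix.dotProduct_mulVec v A x).symm
    _ = v ⬝ᵥ ((A * Aᵀ) *ᵥ v) := by rw [hx, Matrix.mulVec_mulVec]
    _ = 0 := by rw [hv, dotProduct_zero]
  have hx0 : x = 0 := by
    funext j
    have h1 : ∑ j, x j * x j = 0 := hxx
    have := (Finset.sum_eq_zero_iff_of_nonneg
      (fun j _ => mul_self_nonneg (x j))).1 h1 j (Finset.mem_univ j)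
    exact mul_self_eq_zero.mp this
  have hsum : ∑ i, v i • A i = 0 := by
    funext j
    have : (Aᵀ *ᵥ v) j = 0 := congrFun hx0 j
    simpa [Matrix.mulVec, dotProduct, Matrix.transpose,
      Finset.sum_apply, mul_comm] using this
  exact hv0 (funext (Fintype.linearIndependent_iff.1 hA v hsum))

/-- if b_1, …, b_k ∈ ℤ^n is the basis of a free commutative
    monoid (every nonnegative-integer combination has unique coefficients),
    then b_1, …, b_k are linearly independent over ℝ; in particular k ≤ n. -/
theorem free_monoid_basis_linearIndependent (n k : ℕ) (b : Fin k → (Fin n → ℤ))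
    (hfree : ∀ c d : Fin k → ℕ,
      (∑ i, c i • b i) = (∑ i, d i • b i) → c = d) :
    LinearIndependent ℝ (fun i => (fun j => ((b i j : ℝ)))) ∧ k ≤ n := by
  classical
  -- integer linear independence of the rational vectors
  set vq : Fin k → (Fin n → ℚ) := fun i j => (b i j : ℚ) with hvq
  have hZ : LinearIndependent ℤ vq := by
    rw [Fintype.linearIndependent_iff]
    intro g hg i
    -- coefficients as integers
    have hgz : ∑ i, g i • b i = 0 := by
      funext j
      have := congrFun hg j
      simp only [Finset.sum_apply, Pi.smul_apply, Pi.zero_apply, hvq,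
        zsmul_eq_mul] at this ⊢
      have : ((∑ i, g i * b i j : ℤ) : ℚ) = 0 := by push_cast; exact this
      exact_mod_cast this
    set c : Fin k → ℕ := fun i => (g i).toNat with hc
    set d : Fin k → ℕ := fun i => (-(g i)).toNat with hd
    have hcd : (∑ i, c i • b i) = (∑ i, d i • b i) := by
      funext j
      have h1 : ∑ i, g i * b i j = 0 := by
        have := congrFun hgz j
        simpa [Finset.sum_apply, zsmul_eq_mul] using this
      have h2 : ∀ i, (g i : ℤ) = (c i : ℤ) - (d i : ℤ) := by
        intro i; simp only [hc, hd]; omega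
      simp only [Finset.sum_apply, Pi.smul_apply, nsmul_eq_mul]
      have : ∑ i, ((c i : ℤ) - (d i : ℤ)) * b i j = 0 := by
        rw [← h1]; exact Finset.sum_congr rfl fun i _ => by rw [← h2]
      have := this
      rw [Finset.sum_congr rfl (fun i _ => sub_mul (c i : ℤ) (d i : ℤ) (b i j)),
        Finset.sum_sub_distrib, sub_eq_zero] at this
      exact this
    have := congrFun (hfree c d hcd) i
    simp only [hc, hd] at this
    omega
  -- rational linear independence
  have hQ : LinearIndependent ℚ vq := (LinearIndependent.iff_fractionRing ℤ ℚ).1 hZ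
  -- the Gram matrix has nonzero determinant over ℚ
  set A : Matrix (Fin k) (Fin n) ℚ := Matrix.of vq with hA
  have hdet : (A * A.transpose).det ≠ 0 := aux_det_ne_zero A hQ
  -- over ℝ
  set B : Matrix (Fin k) (Fin n) ℝ := Matrix.of (fun i j => (b i j : ℝ)) with hB
  have hBA : B = A.map (Rat.cast : ℚ → ℝ) := by
    funext i j; simp [hB, hA, hvq]
  have hdetR : (B * B.transpose).det ≠ 0 := by
    have : B * B.transpose = (A * A.transpose).map (Rat.cast : ℚ → ℝ) := by
      rw [hBA, ← Matrix.transpose_map]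
      exact (Matrix.map_mul (f := (Rat.castHom ℝ))).symm
    rw [this, show (Rat.cast : ℚ → ℝ) = ⇑(Rat.castHom ℝ) from rfl,
      ← RingHom.mapMatrix_apply, ← RingHom.map_det]
    simpa using hdet
  have hR : LinearIndependent ℝ (fun i => (fun j => ((b i j : ℝ)))) := by
    rw [Fintype.linearIndependent_iff]
    intro g hg
    by_contra hg0
    have hgne : g ≠ 0 := fun h => hg0 (fun i => congrFun h i)
    -- Bᵀ *ᵥ g = 0
    have hBg : Matrix.mulVec B.transpose g = 0 := by
      funext j
      have := congrFun hg j
      simp only [Finset.sum_apply, Pi.smul_apply, Pi.zero_apply, smul_eq_mul] at this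
      simpa [Matrix.mulVec, dotProduct, Matrix.transpose, hB, mul_comm] using this
    have : Matrix.mulVec (B * B.transpose) g = 0 := by
      rw [← Matrix.mulVec_mulVec, hBg, Matrix.mulVec_zero]
    exact hdetR ((Matrix.exists_mulVec_eq_zero_iff).1 ⟨g, hgne, this⟩)
  refine ⟨hR, ?_⟩
  have := hR.fintype_card_le_finrank
  simpa using this.trans (le_of_eq (Module.finrank_fintype_fun_eq_card ℝ))
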